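/- The identity Σ_{α=1}^{3} (−1)^α θ_{α+1}(η)² · b_α(x) · b_α(x+η) = θ₁(η)² holds for all complex x and η (where defined), where b_α(x) = θ_{α+1}(2x)/θ₁(2x). -/

import Mathlib

open Complex

noncomputable def theta1 (τ z : ℂ) : ℂ :=
  ∑' k : ℤ, Complex.exp (Real.pi * Complex.I * τ * (k + 1/2)^2 +
    2 * Real.pi * Complex.I * (z + 1/2) * (k + 1/2))

noncomputable def theta2 (τ z : ℂ) : ℂ :=
  ∑' k : ℤ, Complex.exp (Real.pi * Complex.I * τ * (k + 1/2)^2 +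
    2 * Real.pi * Complex.I * z * (k + 1/2))

noncomputable def theta3 (τ z : ℂ) : ℂ :=
  ∑' k : ℤ, Complex.exp (Real.pi * Complex.I * τ * k^2 +
    2 * Real.pi * Complex.I * z * k)

noncomputable def theta4 (τ z : ℂ) : ℂ :=
  ∑' k : ℤ, Complex.exp (Real.pi * Complex.I * τ * k^2 +
    2 * Real.pi * Complex.I * (z + 1/2) * k)

/-- `th a τ z = θ_a(z|τ)` for `a = 1,2,3,4`. -/
noncomputable def th : ℕ → ℂ → ℂ → ℂ
  | 1 => theta1
  | 2 => theta2
  | 3 => theta3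
  | _ => theta4

namespace ThetaRiemann

/-- index type for quadruple sums -/
abbrev K := (ℤ × ℤ) × (ℤ × ℤ)

/-- integer-characteristic theta term -/
noncomputable def t3 (τ z : ℂ) (k : ℤ) : ℂ :=
  Complex.exp (Real.pi * Complex.I * τ * k^2 + 2 * Real.pi * Complex.I * z * k)

/-- half-integer-characteristic theta term -/
noncomputable def t2 (τ z : ℂ) (k : ℤ) : ℂ :=
  Complex.exp (Real.pi * Complex.I * τ * (k + 1/2)^2 +
    2 * Real.pi * Complex.I * z * (k + 1/2))

lemma theta3_eq (τ z : ℂ) : theta3 τ z = ∑' k : ℤ, t3 τ z k := rfl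
lemma theta4_eq (τ z : ℂ) : theta4 τ z = ∑' k : ℤ, t3 τ (z + 1/2) k := rfl
lemma theta2_eq (τ z : ℂ) : theta2 τ z = ∑' k : ℤ, t2 τ z k := rfl
lemma theta1_eq (τ z : ℂ) : theta1 τ z = ∑' k : ℤ, t2 τ (z + 1/2) k := rfl

lemma st3 {τ : ℂ} (hτ : 0 < τ.im) (z : ℂ) : Summable fun k : ℤ => ‖t3 τ z k‖ := by
  have h : Summable fun k : ℤ => t3 τ z k := by
    refine ((summable_jacobiTheta₂_term_iff z τ).2 hτ).congr fun k => ?_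
    rw [jacobiTheta₂_term, t3]
    congr 1
    ring
  exact summable_norm_iff.2 h

lemma st2 {τ : ℂ} (hτ : 0 < τ.im) (z : ℂ) : Summable fun k : ℤ => ‖t2 τ z k‖ := by
  have h : Summable fun k : ℤ => t2 τ z k := by
    refine (((summable_jacobiTheta₂_term_iff (z + τ/2) τ).2 hτ).mul_left
      (Complex.exp (Real.pi * Complex.I * τ / 4 + Real.pi * Complex.I * z))).congr fun k => ?_
    rw [jacobiTheta₂_term, t2, ← Complex.exp_add]
    congr 1
    ring
  exact summable_norm_iff.2 h

lemma exp4 (a b c d : ℂ) :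
    Complex.exp a * Complex.exp b * Complex.exp c * Complex.exp d
      = Complex.exp (a + b + c + d) := by
  rw [← Complex.exp_add, ← Complex.exp_add, ← Complex.exp_add]

lemma exp_eq_exp_shift (a b : ℂ) (n : ℤ) (h : a = b + n * (2 * Real.pi * Complex.I)) :
    Complex.exp a = Complex.exp b := by
  rw [h, Complex.exp_add, Complex.exp_int_mul_two_pi_mul_I, mul_one]

lemma tsum4 {f g h l : ℤ → ℂ} (hf : Summable fun k => ‖f k‖) (hg : Summable fun k => ‖g k‖)
    (hh : Summable fun k => ‖h k‖) (hl : Summable fun k => ‖l k‖) :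
    (∑' k : ℤ, f k) * (∑' k : ℤ, g k) * (∑' k : ℤ, h k) * (∑' k : ℤ, l k)
      = ∑' k : K, f k.1.1 * g k.1.2 * h k.2.1 * l k.2.2 := by
  rw [mul_assoc ((∑' k : ℤ, f k) * (∑' k : ℤ, g k)),
    tsum_mul_tsum_of_summable_norm hf hg, tsum_mul_tsum_of_summable_norm hh hl,
    tsum_mul_tsum_of_summable_norm (hf.mul_norm hg) (hh.mul_norm hl)]
  exact tsum_congr fun k => by ring

lemma summable4 {f g h l : ℤ → ℂ} (hf : Summable fun k => ‖f k‖) (hg : Summable fun k => ‖g k‖)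
    (hh : Summable fun k => ‖h k‖) (hl : Summable fun k => ‖l k‖) :
    Summable fun k : K => f k.1.1 * g k.1.2 * h k.2.1 * l k.2.2 :=
  (((hf.mul_norm hg).mul_norm (hh.mul_norm hl)).of_norm).congr fun k => by ring

/-- the sign character -/
noncomputable def χ (k : K) : ℂ :=
  Complex.exp (Real.pi * Complex.I * ((k.1.1 : ℂ) + k.1.2 + k.2.1 + k.2.2))

noncomputable def ff (τ u η : ℂ) (k : K) : ℂ :=
  t3 τ η k.1.1 * t3 τ η k.1.2 * t3 τ u k.2.1 * t3 τ (u + 2*η) k.2.2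

noncomputable def gg (τ u η : ℂ) (k : K) : ℂ :=
  t2 τ η k.1.1 * t2 τ η k.1.2 * t2 τ u k.2.1 * t2 τ (u + 2*η) k.2.2

def ιA (p : K) : K := ((p.1.1, p.1.2), (p.2.1, 2*p.2.2 + 1 - p.1.1 - p.1.2 - p.2.1))

def ιB (p : K) : K := ((p.1.1, p.1.2), (p.2.1, 2*p.2.2 - p.1.1 - p.1.2 - p.2.1))

def σf (p : K) : K :=
  ((p.2.2 - p.1.2 - p.2.1, p.2.2 - p.1.1 - p.2.1),
    (p.2.2 - p.1.1 - p.1.2, 2*p.2.2 - p.1.1 - p.1.2 - p.2.1))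

lemma σf_involutive : Function.Involutive σf := by
  rintro ⟨⟨a, b⟩, c, d⟩
  simp only [σf, Prod.mk.injEq]
  refine ⟨⟨by ring, by ring⟩, by ring, by ring⟩

noncomputable def σe : Equiv.Perm K := σf_involutive.toPerm

lemma ιA_inj : Function.Injective ιA := by
  rintro ⟨⟨a, b⟩, c, d⟩ ⟨⟨a', b'⟩, c', d'⟩ h
  simp only [ιA, Prod.mk.injEq] at h ⊢
  omega

lemma ιB_inj : Function.Injective ιB := by
  rintro ⟨⟨a, b⟩, c, d⟩ ⟨⟨a', b'⟩, c', d'⟩ h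
  simp only [ιB, Prod.mk.injEq] at h ⊢
  omega

lemma χ_even {k : K} (h : Even (k.1.1 + k.1.2 + k.2.1 + k.2.2)) : χ k = 1 := by
  obtain ⟨n, hn⟩ := h
  have hc : ((k.1.1 : ℂ) + k.1.2 + k.2.1 + k.2.2) = (n : ℂ) + n := by
    have := congrArg (fun z : ℤ => (z : ℂ)) hn
    push_cast at this
    linear_combination this
  rw [χ, show Real.pi * Complex.I * ((k.1.1 : ℂ) + k.1.2 + k.2.1 + k.2.2)
      = (n : ℂ) * (2 * Real.pi * Complex.I) by rw [hc]; ring]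
  exact Complex.exp_int_mul_two_pi_mul_I n

lemma χ_odd {k : K} (h : Odd (k.1.1 + k.1.2 + k.2.1 + k.2.2)) : χ k = -1 := by
  obtain ⟨n, hn⟩ := h
  have hc : ((k.1.1 : ℂ) + k.1.2 + k.2.1 + k.2.2) = 2 * (n : ℂ) + 1 := by
    have := congrArg (fun z : ℤ => (z : ℂ)) hn
    push_cast at this
    linear_combination this
  rw [χ, show Real.pi * Complex.I * ((k.1.1 : ℂ) + k.1.2 + k.2.1 + k.2.2)
      = (n : ℂ) * (2 * Real.pi * Complex.I) + Real.pi * Complex.I by rw [hc]; ring,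
    Complex.exp_add, Complex.exp_int_mul_two_pi_mul_I, one_mul, Complex.exp_pi_mul_I]

/-- The Riemann quartic theta relation for arguments `(η, η, u, u+2η)`. -/
lemma main (τ : ℂ) (hτ : 0 < τ.im) (u η : ℂ) :
    theta2 τ η ^ 2 * theta2 τ u * theta2 τ (u + 2*η)
      + theta1 τ η ^ 2 * theta1 τ u * theta1 τ (u + 2*η)
    = theta3 τ η ^ 2 * theta3 τ u * theta3 τ (u + 2*η)
      - theta4 τ η ^ 2 * theta4 τ u * theta4 τ (u + 2*η) := by
  have hS3 : theta3 τ η ^ 2 * theta3 τ u * theta3 τ (u + 2*η) = ∑' k : K, ff τ u η k := by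
    rw [sq, theta3_eq, theta3_eq, theta3_eq,
      tsum4 (st3 hτ η) (st3 hτ η) (st3 hτ u) (st3 hτ (u + 2*η))]
    rfl
  have hS4 : theta4 τ η ^ 2 * theta4 τ u * theta4 τ (u + 2*η)
      = ∑' k : K, χ k * ff τ u η k := by
    rw [sq, theta4_eq, theta4_eq, theta4_eq,
      tsum4 (st3 hτ (η + 1/2)) (st3 hτ (η + 1/2)) (st3 hτ (u + 1/2)) (st3 hτ (u + 2*η + 1/2))]
    refine tsum_congr fun k => ?_
    obtain ⟨⟨a, b⟩, c, e⟩ := k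
    simp only [χ, ff, t3]
    rw [exp4, exp4, ← Complex.exp_add]
    refine exp_eq_exp_shift _ _ 0 ?_
    push_cast
    ring
  have hS2 : theta2 τ η ^ 2 * theta2 τ u * theta2 τ (u + 2*η) = ∑' k : K, gg τ u η k := by
    rw [sq, theta2_eq, theta2_eq, theta2_eq,
      tsum4 (st2 hτ η) (st2 hτ η) (st2 hτ u) (st2 hτ (u + 2*η))]
    rfl
  have hS1 : theta1 τ η ^ 2 * theta1 τ u * theta1 τ (u + 2*η)
      = ∑' k : K, χ k * gg τ u η k := by
    rw [sq, theta1_eq, theta1_eq, theta1_eq,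
      tsum4 (st2 hτ (η + 1/2)) (st2 hτ (η + 1/2)) (st2 hτ (u + 1/2)) (st2 hτ (u + 2*η + 1/2))]
    refine tsum_congr fun k => ?_
    obtain ⟨⟨a, b⟩, c, e⟩ := k
    simp only [χ, gg, t2]
    rw [exp4, exp4, ← Complex.exp_add]
    refine exp_eq_exp_shift _ _ 1 ?_
    push_cast
    ring
  have sf : Summable fun k : K => ff τ u η k :=
    summable4 (st3 hτ η) (st3 hτ η) (st3 hτ u) (st3 hτ (u + 2*η))
  have sχf : Summable fun k : K => χ k * ff τ u η k := by
    refine (summable4 (st3 hτ (η + 1/2)) (st3 hτ (η + 1/2)) (st3 hτ (u + 1/2))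
      (st3 hτ (u + 2*η + 1/2))).congr fun k => ?_
    obtain ⟨⟨a, b⟩, c, e⟩ := k
    simp only [χ, ff, t3]
    rw [exp4, exp4, ← Complex.exp_add]
    refine exp_eq_exp_shift _ _ 0 ?_
    push_cast
    ring
  have sg : Summable fun k : K => gg τ u η k :=
    summable4 (st2 hτ η) (st2 hτ η) (st2 hτ u) (st2 hτ (u + 2*η))
  have sχg : Summable fun k : K => χ k * gg τ u η k := by
    refine (summable4 (st2 hτ (η + 1/2)) (st2 hτ (η + 1/2)) (st2 hτ (u + 1/2))
      (st2 hτ (u + 2*η + 1/2))).congr fun k => ?_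
    obtain ⟨⟨a, b⟩, c, e⟩ := k
    simp only [χ, gg, t2]
    rw [exp4, exp4, ← Complex.exp_add]
    refine exp_eq_exp_shift _ _ 1 ?_
    push_cast
    ring
  rw [hS1, hS2, hS3, hS4, ← Summable.tsum_add sg sχg, ← Summable.tsum_sub sf sχf]
  have hsuppB : Function.support (fun k : K => gg τ u η k + χ k * gg τ u η k)
      ⊆ Set.range ιB := by
    rintro ⟨⟨a, b⟩, c, e⟩ hk
    rcases Int.even_or_odd (a + b + c + e) with hpar | hpar
    · obtain ⟨n, hn⟩ := hpar
      refine ⟨((a, b), (c, n)), ?_⟩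
      show ((a, b), (c, 2*n - a - b - c)) = ((a, b), (c, e))
      have hne : 2*n - a - b - c = e := by omega
      rw [hne]
    · exfalso
      apply hk
      have : χ ((a, b), (c, e)) = -1 := χ_odd hpar
      simp only [this]
      ring
  have hsuppA : Function.support (fun k : K => ff τ u η k - χ k * ff τ u η k)
      ⊆ Set.range ιA := by
    rintro ⟨⟨a, b⟩, c, e⟩ hk
    rcases Int.even_or_odd (a + b + c + e) with hpar | hpar
    · exfalso
      apply hk
      have : χ ((a, b), (c, e)) = 1 := χ_even hpar
      simp only [this]
      ring
    · obtain ⟨n, hn⟩ := hpar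
      refine ⟨((a, b), (c, n)), ?_⟩
      show ((a, b), (c, 2*n + 1 - a - b - c)) = ((a, b), (c, e))
      have hne : 2*n + 1 - a - b - c = e := by omega
      rw [hne]
  calc ∑' k : K, (gg τ u η k + χ k * gg τ u η k)
      = ∑' p : K, (gg τ u η (ιB p) + χ (ιB p) * gg τ u η (ιB p)) :=
        (ιB_inj.tsum_eq hsuppB).symm
    _ = ∑' p : K, 2 * gg τ u η (ιB p) := by
        refine tsum_congr fun p => ?_
        obtain ⟨⟨a, b⟩, c, d⟩ := p
        have : χ (ιB ((a, b), (c, d))) = 1 := χ_even ⟨d, by show a + b + c + (2*d - a - b - c) = d + d; ring⟩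
        rw [this]
        ring
    _ = ∑' p : K, 2 * gg τ u η (ιB (σe p)) := (σe.tsum_eq fun q => 2 * gg τ u η (ιB q)).symm
    _ = ∑' p : K, 2 * ff τ u η (ιA p) := by
        refine tsum_congr fun p => ?_
        obtain ⟨⟨a, b⟩, c, d⟩ := p
        have hkey : ff τ u η (ιA ((a, b), (c, d))) = gg τ u η (ιB (σf ((a, b), (c, d)))) := by
          simp only [ff, gg, ιA, ιB, σf, t3, t2]
          rw [exp4, exp4]
          refine exp_eq_exp_shift _ _ 0 ?_
          push_cast
          ring
        rw [show σe ((a, b), (c, d)) = σf ((a, b), (c, d)) from rfl, ← hkey]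
    _ = ∑' p : K, (ff τ u η (ιA p) - χ (ιA p) * ff τ u η (ιA p)) := by
        refine tsum_congr fun p => ?_
        obtain ⟨⟨a, b⟩, c, d⟩ := p
        have : χ (ιA ((a, b), (c, d))) = -1 := χ_odd ⟨d, by show a + b + c + (2*d + 1 - a - b - c) = 2*d + 1; ring⟩
        rw [this]
        ring
    _ = ∑' k : K, (ff τ u η k - χ k * ff τ u η k) := ιA_inj.tsum_eq hsuppA

end ThetaRiemann

theorem sum_b_identity_eta (τ : ℂ) (hτ : 0 < τ.im) (x η : ℂ)
    (h1 : theta1 τ (2*x) ≠ 0) (h2 : theta1 τ (2*(x+η)) ≠ 0) :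
    ∑ α ∈ Finset.Icc 1 3, (-1 : ℂ)^α * (th (α+1) τ η)^2 *
        (th (α+1) τ (2*x) / theta1 τ (2*x)) *
        (th (α+1) τ (2*(x+η)) / theta1 τ (2*(x+η))) =
      (theta1 τ η)^2 := by
  have hIcc : (Finset.Icc 1 3 : Finset ℕ) = {1, 2, 3} := by decide
  rw [hIcc]
  have h2' : (2 : ℂ) * (x + η) = 2*x + 2*η := by ring
  rw [h2'] at h2 ⊢
  have hmain := ThetaRiemann.main τ hτ (2*x) η
  have th2 : th 2 = theta2 := rfl
  have th3 : th 3 = theta3 := rfl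
  have th4 : th 4 = theta4 := rfl
  rw [Finset.sum_insert (by decide), Finset.sum_insert (by decide), Finset.sum_singleton]
  norm_num [th2, th3, th4]
  generalize 2*x + 2*η = w at h2 hmain ⊢
  field_simp
  linear_combination (-1 : ℂ) * hmain
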